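/- Coupling of the Loop O(1) model and FK-Ising (free boundary, no external field): Let G be a finite graph, x ∈ [0,1], and let η be a random even spanning subgraph of G with probability proportional to x^{|η|}. Let X be an independent Bernoulli(x) percolation on E(G), and set η' = η ∪ X. Then η' is distributed as the random cluster model with q = 2 and p = 2x/(1+x), i.e., ℙ(η' = ω) is proportional to (p/(1-p))^{|ω|}·2^{k(ω)}, where k(ω) is the number of connected components of (V, ω). -/

import Mathlib

open scoped BigOperators

section Aux
open Finset
open scoped Classical
variable {V : Type*} [Fintype V] [DecidableEq V]

noncomputable def bdMap (ω' : Finset (Sym2 V)) : ((↥ω' → ZMod 2)) →+ (V → ZMod 2) where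
  toFun f := fun v => ∑ e : ↥ω', if v ∈ (e : Sym2 V) then f e else 0
  map_zero' := by funext v; simp
  map_add' f g := by
    funext v
    rw [Pi.add_apply, ← Finset.sum_add_distrib]
    exact Finset.sum_congr rfl fun e _ => by split <;> simp

noncomputable def Tmap (ω' : Finset (Sym2 V)) :
    (V → ZMod 2) →+ ((SimpleGraph.fromEdgeSet (↑ω' : Set (Sym2 V))).ConnectedComponent → ZMod 2) where
  toFun f := fun C => ∑ v : V,
    if (SimpleGraph.fromEdgeSet (↑ω' : Set (Sym2 V))).connectedComponentMk v = C then f v else 0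
  map_zero' := by funext C; simp
  map_add' f g := by
    funext C
    rw [Pi.add_apply, ← Finset.sum_add_distrib]
    exact Finset.sum_congr rfl fun v _ => by split <;> simp

lemma T_surj (ω' : Finset (Sym2 V)) : Function.Surjective (Tmap ω') := by
  intro g0
  let H := SimpleGraph.fromEdgeSet (↑ω' : Set (Sym2 V))
  refine ⟨fun v => if v = (H.connectedComponentMk v).out then g0 (H.connectedComponentMk v) else 0, ?_⟩
  funext C
  simp only [Tmap, AddMonoidHom.coe_mk, ZeroHom.coe_mk]
  rw [Finset.sum_eq_single C.out]
  · have h1 : H.connectedComponentMk C.out = C := C.out_eq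
    simp [h1, show (SimpleGraph.fromEdgeSet (↑ω' : Set (Sym2 V))).connectedComponentMk C.out = C from h1]
  · intro v _ hv
    by_cases h : H.connectedComponentMk v = C
    · simp [h, hv]
    · simp [h, show ¬ (SimpleGraph.fromEdgeSet (↑ω' : Set (Sym2 V))).connectedComponentMk v = C from h]
  · intro h; exact absurd (Finset.mem_univ _) h

noncomputable def pairFn (u v : V) : V → ZMod 2 :=
  fun w => (if w = u then 1 else 0) + (if w = v then 1 else 0)

lemma pairFn_self (u : V) : pairFn u u = 0 := by
  funext w; unfold pairFn
  have : ∀ z : ZMod 2, z + z = 0 := by decide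
  simp [this]

lemma pair_mem_range (ω' : Finset (Sym2 V)) (u v : V)
    (h : (SimpleGraph.fromEdgeSet (↑ω' : Set (Sym2 V))).Reachable u v) :
    pairFn u v ∈ AddMonoidHom.range (bdMap ω') := by
  obtain ⟨p⟩ := h
  induction p with
  | nil => rw [pairFn_self]; exact zero_mem _
  | @cons a b c hadj p ih =>
    rw [SimpleGraph.fromEdgeSet_adj] at hadj
    obtain ⟨hm, hab⟩ := hadj
    have h1 : pairFn a b ∈ AddMonoidHom.range (bdMap ω') := by
      refine ⟨fun e' => if e' = ⟨s(a, b), hm⟩ then 1 else 0, ?_⟩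
      funext w
      show (∑ e : ↥ω', if w ∈ (e : Sym2 V) then (if e = ⟨s(a, b), hm⟩ then 1 else 0) else 0)
        = pairFn a b w
      rw [Finset.sum_eq_single (⟨s(a, b), hm⟩ : ↥ω')]
      · unfold pairFn
        by_cases hw : w ∈ s(a, b)
        · rw [Sym2.mem_iff] at hw
          rcases hw with rfl | rfl <;> simp [hab, Ne.symm hab, Sym2.mem_iff]
        · rw [Sym2.mem_iff] at hw
          push_neg at hw
          simp [hw.1, hw.2, Sym2.mem_iff]
      · intro e _ he; simp [he]
      · intro h; exact absurd (Finset.mem_univ _) h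
    have h2 := add_mem h1 ih
    have hkey : pairFn a b + pairFn b c = pairFn a c := by
      funext w; unfold pairFn
      have : ∀ x y z : ZMod 2, (x + z) + (z + y) = x + y := by decide
      simpa using this _ _ _
    rwa [hkey] at h2

lemma sum_pair_comp (ω' : Finset (Sym2 V))
    (C : (SimpleGraph.fromEdgeSet (↑ω' : Set (Sym2 V))).ConnectedComponent)
    (s : Sym2 V) (hs : s ∈ ω') (hd : ¬ s.IsDiag) (c : ZMod 2) :
    (∑ v : V, if (SimpleGraph.fromEdgeSet (↑ω' : Set (Sym2 V))).connectedComponentMk v = C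
        then (if v ∈ s then c else 0) else 0) = 0 := by
  induction s using Sym2.ind with
  | _ a b =>
    have hab : a ≠ b := by simpa [Sym2.isDiag_iff_proj_eq] using hd
    have hadj : (SimpleGraph.fromEdgeSet (↑ω' : Set (Sym2 V))).Adj a b := by
      rw [SimpleGraph.fromEdgeSet_adj]; exact ⟨hs, hab⟩
    have hmk : (SimpleGraph.fromEdgeSet (↑ω' : Set (Sym2 V))).connectedComponentMk a
        = (SimpleGraph.fromEdgeSet (↑ω' : Set (Sym2 V))).connectedComponentMk b :=
      SimpleGraph.ConnectedComponent.connectedComponentMk_eq_of_adj hadj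
    rw [← Finset.sum_subset (Finset.subset_univ ({a, b} : Finset V))
      (fun v _ hv => by
        have hvs : v ∉ s(a, b) := by
          rw [Sym2.mem_iff]
          simp only [Finset.mem_insert, Finset.mem_singleton] at hv
          tauto
        simp [hvs])]
    rw [Finset.sum_pair hab, hmk]
    have : ∀ z : ZMod 2, z + z = 0 := by decide
    by_cases h : (SimpleGraph.fromEdgeSet (↑ω' : Set (Sym2 V))).connectedComponentMk b = C <;>
      simp [h, Sym2.mem_iff, this]

lemma T_comp_bd (ω' : Finset (Sym2 V)) (hω : ∀ e ∈ ω', ¬ e.IsDiag) (f : ↥ω' → ZMod 2) :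
    Tmap ω' (bdMap ω' f) = 0 := by
  funext C
  show (∑ v : V, if _ = C then (∑ e : ↥ω', if v ∈ (e : Sym2 V) then f e else 0) else 0) = 0
  have : ∀ v : V, (if (SimpleGraph.fromEdgeSet (↑ω' : Set (Sym2 V))).connectedComponentMk v = C
      then (∑ e : ↥ω', if v ∈ (e : Sym2 V) then f e else 0) else 0)
      = ∑ e : ↥ω', (if (SimpleGraph.fromEdgeSet (↑ω' : Set (Sym2 V))).connectedComponentMk v = C
        then (if v ∈ (e : Sym2 V) then f e else 0) else 0) := by
    intro v; split <;> simp
  simp only [this]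
  rw [Finset.sum_comm]
  refine Finset.sum_eq_zero fun e _ => ?_
  exact sum_pair_comp ω' C e.1 e.2 (hω e.1 e.2) (f e)

lemma Tmap_apply (ω' : Finset (Sym2 V)) (f : V → ZMod 2)
    (C : (SimpleGraph.fromEdgeSet (↑ω' : Set (Sym2 V))).ConnectedComponent) :
    Tmap ω' f C = ∑ v : V,
      (if (SimpleGraph.fromEdgeSet (↑ω' : Set (Sym2 V))).connectedComponentMk v = C then f v else 0) := rfl

lemma ker_T_subset (ω' : Finset (Sym2 V)) (hω : ∀ e ∈ ω', ¬ e.IsDiag) :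
    ∀ (n : ℕ) (f : V → ZMod 2), (Finset.univ.filter (fun v => f v ≠ 0)).card ≤ n →
      Tmap ω' f = 0 → f ∈ AddMonoidHom.range (bdMap ω') := by
  intro n
  induction n with
  | zero =>
    intro f hcard _
    have : f = 0 := by
      funext v
      show f v = 0
      by_contra hv
      have hm : v ∈ Finset.univ.filter (fun v => f v ≠ 0) := by simp [hv]
      have := Finset.card_pos.mpr ⟨v, hm⟩
      omega
    rw [this]; exact zero_mem _
  | succ n ih =>
    intro f hcard hT
    by_cases hf : f = 0
    · rw [hf]; exact zero_mem _
    have hex : ∃ v, f v ≠ 0 := by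
      by_contra h; push_neg at h; exact hf (funext fun v => h v)
    obtain ⟨v, hv⟩ := hex
    have hone : ∀ z : ZMod 2, z ≠ 0 → z = 1 := by decide
    have hsum : (∑ u : V, if (SimpleGraph.fromEdgeSet (↑ω' : Set (Sym2 V))).connectedComponentMk u
        = (SimpleGraph.fromEdgeSet (↑ω' : Set (Sym2 V))).connectedComponentMk v then f u else 0) = 0 := by
      have := congrFun hT ((SimpleGraph.fromEdgeSet (↑ω' : Set (Sym2 V))).connectedComponentMk v)
      rwa [Tmap_apply] at this
    have hw : ∃ w, w ≠ v ∧ (SimpleGraph.fromEdgeSet (↑ω' : Set (Sym2 V))).connectedComponentMk w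
        = (SimpleGraph.fromEdgeSet (↑ω' : Set (Sym2 V))).connectedComponentMk v ∧ f w ≠ 0 := by
      by_contra h
      push_neg at h
      rw [Finset.sum_eq_single v (fun u _ hu => by
        by_cases h1 : (SimpleGraph.fromEdgeSet (↑ω' : Set (Sym2 V))).connectedComponentMk u
            = (SimpleGraph.fromEdgeSet (↑ω' : Set (Sym2 V))).connectedComponentMk v
        · simp [h1, h u hu h1]
        · simp [h1]) (fun h => absurd (Finset.mem_univ _) h)] at hsum
      simp only [if_pos rfl] at hsum
      exact hv hsum
    obtain ⟨w, hwv, hmk, hfw⟩ := hw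
    have hreach : (SimpleGraph.fromEdgeSet (↑ω' : Set (Sym2 V))).Reachable v w :=
      SimpleGraph.ConnectedComponent.exact hmk.symm
    have hpair := pair_mem_range ω' v w hreach
    obtain ⟨g, hg⟩ := hpair
    set f' := f + pairFn v w with hf'
    have hTf' : Tmap ω' f' = 0 := by
      rw [hf', map_add, hT, ← hg, T_comp_bd ω' hω, add_zero]
    have hpvv : pairFn v w v = 1 := by
      unfold pairFn; simp [Ne.symm hwv]
    have hpww : pairFn v w w = 1 := by
      unfold pairFn; simp [hwv]
    have hfu' : ∀ u, f u = 0 → f' u = 0 := by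
      intro u hu
      have h1 : u ≠ v := fun h => hv (h ▸ hu)
      have h2 : u ≠ w := fun h => hfw (h ▸ hu)
      show f u + pairFn v w u = 0
      unfold pairFn
      simp [hu, h1, h2]
    have hsupp : (Finset.univ.filter (fun u => f' u ≠ 0)) ⊆
        (Finset.univ.filter (fun u => f u ≠ 0)).erase v := by
      intro u hu
      simp only [Finset.mem_filter, Finset.mem_univ, true_and] at hu
      rw [Finset.mem_erase]
      refine ⟨?_, ?_⟩
      · rintro rfl
        apply hu
        show f u + pairFn u w u = 0
        rw [hpvv, hone _ hv]
        decide
      · simp only [Finset.mem_filter, Finset.mem_univ, true_and]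
        intro h0
        exact hu (hfu' u h0)
    have hvmem : v ∈ Finset.univ.filter (fun u => f u ≠ 0) := by simp [hv]
    have hcard' : (Finset.univ.filter (fun u => f' u ≠ 0)).card ≤ n := by
      have h1 := Finset.card_le_card hsupp
      rw [Finset.card_erase_of_mem hvmem] at h1
      omega
    have hf'mem := ih f' hcard' hTf'
    have : f = f' + pairFn v w := by
      funext u
      show f u = (f u + pairFn v w u) + pairFn v w u
      have : ∀ a b : ZMod 2, a = (a + b) + b := by decide
      exact this _ _
    rw [this]
    exact add_mem hf'mem ⟨g, hg⟩

noncomputable def indFn (ω' η : Finset (Sym2 V)) : ↥ω' → ZMod 2 :=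
  fun e => if (e : Sym2 V) ∈ η then 1 else 0

lemma bd_ind (ω' η : Finset (Sym2 V)) (hη : η ⊆ ω') (v : V) :
    bdMap ω' (indFn ω' η) v = ((η.filter fun e => v ∈ e).card : ZMod 2) := by
  show (∑ e : ↥ω', if v ∈ (e : Sym2 V) then (if (e : Sym2 V) ∈ η then 1 else 0) else 0) = _
  rw [Finset.sum_coe_sort ω' (fun e => if v ∈ e then (if e ∈ η then (1 : ZMod 2) else 0) else 0)]
  rw [← Finset.sum_subset hη (fun e _ he => by simp [he])]
  rw [Finset.sum_congr rfl (fun e he => by simp [he] : ∀ e ∈ η, _ = if v ∈ e then (1 : ZMod 2) else 0)]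
  rw [Finset.sum_boole]

noncomputable def invSet (ω' : Finset (Sym2 V)) (f : ↥ω' → ZMod 2) : Finset (Sym2 V) :=
  (ω'.attach.filter (fun e => f e = 1)).image Subtype.val

omit [Fintype V] in
lemma invSet_subset (ω' : Finset (Sym2 V)) (f : ↥ω' → ZMod 2) : invSet ω' f ⊆ ω' := by
  intro e he
  simp only [invSet, Finset.mem_image] at he
  obtain ⟨e', _, rfl⟩ := he
  exact e'.2

omit [Fintype V] in
lemma ind_invSet (ω' : Finset (Sym2 V)) (f : ↥ω' → ZMod 2) : indFn ω' (invSet ω' f) = f := by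
  funext e
  have hmem : (e : Sym2 V) ∈ invSet ω' f ↔ f e = 1 := by
    simp only [invSet, Finset.mem_image, Finset.mem_filter, Finset.mem_attach, true_and]
    constructor
    · rintro ⟨e', h1, h2⟩
      rwa [Subtype.ext h2.symm]
    · intro h; exact ⟨e, h, rfl⟩
  unfold indFn
  by_cases h : f e = 1
  · simp [hmem, h]
  · have : f e = 0 := by
      have : ∀ z : ZMod 2, z ≠ 1 → z = 0 := by decide
      exact this _ h
    simp [hmem, h, this]

omit [Fintype V] in
lemma invSet_ind (ω' η : Finset (Sym2 V)) (hη : η ⊆ ω') : invSet ω' (indFn ω' η) = η := by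
  ext e
  simp only [invSet, Finset.mem_image, Finset.mem_filter, Finset.mem_attach, true_and]
  constructor
  · rintro ⟨e', h1, rfl⟩
    unfold indFn at h1
    by_cases h : (e' : Sym2 V) ∈ η
    · exact h
    · simp [h] at h1
  · intro h
    exact ⟨⟨e, hη h⟩, by simp [indFn, h], rfl⟩

lemma even_iff_ker (ω' η : Finset (Sym2 V)) (hη : η ⊆ ω') :
    (∀ v : V, Even ((η.filter fun e => v ∈ e).card)) ↔ bdMap ω' (indFn ω' η) = 0 := by
  constructor
  · intro h
    funext v
    rw [bd_ind ω' η hη v]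
    show _ = (0 : ZMod 2)
    rw [ZMod.natCast_eq_zero_iff]
    exact even_iff_two_dvd.mp (h v)
  · intro h v
    have := congrFun h v
    rw [bd_ind ω' η hη v] at this
    rw [even_iff_two_dvd]
    rwa [show (0 : V → ZMod 2) v = 0 from rfl, ZMod.natCast_eq_zero_iff] at this

noncomputable def evenKerEquiv (ω' : Finset (Sym2 V)) :
    {η // η ∈ ω'.powerset.filter (fun η => ∀ v : V, Even ((η.filter fun e => v ∈ e).card))} ≃
    {f // f ∈ (bdMap ω').ker} where
  toFun η := ⟨indFn ω' η.1, by
    have h := η.2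
    simp only [Finset.mem_filter, Finset.mem_powerset] at h
    exact AddMonoidHom.mem_ker.mpr ((even_iff_ker ω' η.1 h.1).mp h.2)⟩
  invFun f := ⟨invSet ω' f.1, by
    simp only [Finset.mem_filter, Finset.mem_powerset]
    refine ⟨invSet_subset ω' f.1, ?_⟩
    rw [even_iff_ker ω' _ (invSet_subset ω' f.1), ind_invSet]
    exact AddMonoidHom.mem_ker.mp f.2⟩
  left_inv η := by
    have h := η.2
    simp only [Finset.mem_filter, Finset.mem_powerset] at h
    exact Subtype.ext (invSet_ind ω' η.1 h.1)
  right_inv f := Subtype.ext (ind_invSet ω' f.1)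

lemma card_dom_eq {G H : Type*} [AddGroup G] [AddGroup H] (f : G →+ H) :
    Nat.card G = Nat.card f.ker * Nat.card f.range := by
  rw [AddSubgroup.card_eq_card_quotient_mul_card_addSubgroup f.ker,
    Nat.card_congr (QuotientAddGroup.quotientKerEquivRange f).toEquiv, mul_comm]

lemma even_count (ω' : Finset (Sym2 V)) (hω : ∀ e ∈ ω', ¬ e.IsDiag) :
    (ω'.powerset.filter (fun η => ∀ v : V, Even ((η.filter fun e => v ∈ e).card))).card
      * 2 ^ (Fintype.card V)
    = 2 ^ ω'.card
      * 2 ^ (Nat.card (SimpleGraph.fromEdgeSet (↑ω' : Set (Sym2 V))).ConnectedComponent) := by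
  have hrk : (bdMap ω').range = (Tmap ω').ker := by
    ext f
    constructor
    · rintro ⟨g, rfl⟩
      exact AddMonoidHom.mem_ker.mpr (T_comp_bd ω' hω g)
    · intro hf
      exact ker_T_subset ω' hω _ f le_rfl (AddMonoidHom.mem_ker.mp hf)
  have h1 : (2 : ℕ) ^ ω'.card = Nat.card (bdMap ω').ker * Nat.card (Tmap ω').ker := by
    have := card_dom_eq (bdMap ω')
    rwa [Nat.card_fun, Nat.card_zmod, Nat.card_eq_finsetCard, hrk] at this
  have h2 : (2 : ℕ) ^ (Fintype.card V) = Nat.card (Tmap ω').ker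
      * 2 ^ (Nat.card (SimpleGraph.fromEdgeSet (↑ω' : Set (Sym2 V))).ConnectedComponent) := by
    have := card_dom_eq (Tmap ω')
    rw [Nat.card_fun, Nat.card_zmod, Nat.card_eq_fintype_card] at this
    rw [this]
    congr 1
    rw [(AddMonoidHom.range_eq_top).mpr (T_surj ω')]
    rw [Nat.card_congr AddSubgroup.topEquiv.toEquiv, Nat.card_fun, Nat.card_zmod]
  have h0 : (ω'.powerset.filter
      (fun η => ∀ v : V, Even ((η.filter fun e => v ∈ e).card))).card
      = Nat.card (bdMap ω').ker := by
    rw [← Nat.card_eq_finsetCard]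
    exact Nat.card_congr (evenKerEquiv ω')
  rw [h0, h2, h1]
  ring

section Real
open Finset
variable {α : Type*} [DecidableEq α]

lemma binom_one (x : ℝ) (s : Finset α) :
    (∑ t ∈ s.powerset, x ^ t.card * (1 - x) ^ (s.card - t.card)) = 1 := by
  have h := Finset.prod_add (fun _ : α => x) (fun _ : α => 1 - x) s
  simp only [Finset.prod_const] at h
  have h2 : ∀ t ∈ s.powerset, (1 - x) ^ (s \ t).card = (1 - x) ^ (s.card - t.card) := by
    intro t ht
    rw [Finset.card_sdiff_of_subset (Finset.mem_powerset.mp ht)]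
  calc (∑ t ∈ s.powerset, x ^ t.card * (1 - x) ^ (s.card - t.card))
      = ∑ t ∈ s.powerset, x ^ t.card * (1 - x) ^ (s \ t).card :=
        Finset.sum_congr rfl fun t ht => by rw [h2 t ht]
    _ = (x + (1 - x)) ^ s.card := h.symm
    _ = 1 := by norm_num

lemma innerSumX (x : ℝ) (E ω' η : Finset α) (hω' : ω' ⊆ E) :
    (∑ X ∈ E.powerset, (if η ∪ X = ω' then x ^ X.card * (1 - x) ^ (E.card - X.card) else 0))
    = if η ⊆ ω' then x ^ (ω'.card - η.card) * (1 - x) ^ (E.card - ω'.card) else 0 := by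
  by_cases hsub : η ⊆ ω'
  · rw [if_pos hsub, ← Finset.sum_filter]
    have hli : ∀ X ∈ (E.powerset.filter (fun X => η ∪ X = ω')), (ω' \ η) ∪ (X ∩ η) = X := by
      intro X hX
      simp only [Finset.mem_filter, Finset.mem_powerset] at hX
      obtain ⟨-, hXω⟩ := hX
      ext e
      simp only [Finset.mem_union, Finset.mem_sdiff, Finset.mem_inter]
      constructor
      · rintro (⟨h1, h2⟩ | ⟨h1, _⟩)
        · rcases Finset.mem_union.mp (hXω ▸ h1 : e ∈ η ∪ X) with h | h
          · exact absurd h h2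
          · exact h
        · exact h1
      · intro he
        have heω : e ∈ ω' := hXω ▸ Finset.mem_union_right _ he
        by_cases h : e ∈ η
        · exact Or.inr ⟨he, h⟩
        · exact Or.inl ⟨heω, h⟩
    have hbij : (∑ X ∈ E.powerset.filter (fun X => η ∪ X = ω'),
          x ^ X.card * (1 - x) ^ (E.card - X.card))
        = ∑ t ∈ η.powerset, x ^ ((ω' \ η) ∪ t).card * (1 - x) ^ (E.card - ((ω' \ η) ∪ t).card) := by
      refine Finset.sum_bij' (fun X _ => X ∩ η) (fun t _ => (ω' \ η) ∪ t) ?_ ?_ ?_ ?_ ?_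
      · intro X hX
        simp only [Finset.mem_powerset]
        exact Finset.inter_subset_right
      · intro t ht
        simp only [Finset.mem_powerset] at ht
        simp only [Finset.mem_filter, Finset.mem_powerset]
        constructor
        · exact Finset.union_subset ((Finset.sdiff_subset).trans hω') (ht.trans (hsub.trans hω'))
        · rw [← Finset.union_assoc, Finset.union_sdiff_of_subset hsub]
          exact Finset.union_eq_left.mpr (ht.trans hsub)
      · exact hli
      · intro t ht
        simp only [Finset.mem_powerset] at ht
        show (ω' \ η ∪ t) ∩ η = t
        rw [Finset.union_inter_distrib_right, Finset.inter_eq_left.mpr ht,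
          Finset.sdiff_inter_self, Finset.empty_union]
      · intro X hX
        rw [hli X hX]
    rw [hbij]
    -- now sum over η.powerset
    have hdisj : ∀ t ∈ η.powerset, Disjoint (ω' \ η) t := by
      intro t ht
      exact Finset.sdiff_disjoint.mono_right (Finset.mem_powerset.mp ht)
    have hcard : (ω' \ η).card = ω'.card - η.card := Finset.card_sdiff_of_subset hsub
    have hηω : η.card ≤ ω'.card := Finset.card_le_card hsub
    have hωE : ω'.card ≤ E.card := Finset.card_le_card hω'
    calc (∑ t ∈ η.powerset, x ^ ((ω' \ η) ∪ t).card * (1 - x) ^ (E.card - ((ω' \ η) ∪ t).card))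
        = ∑ t ∈ η.powerset, (x ^ (ω'.card - η.card) * (1 - x) ^ (E.card - ω'.card))
            * (x ^ t.card * (1 - x) ^ (η.card - t.card)) := by
          refine Finset.sum_congr rfl fun t ht => ?_
          have htη : t.card ≤ η.card := Finset.card_le_card (Finset.mem_powerset.mp ht)
          rw [Finset.card_union_of_disjoint (hdisj t ht), hcard]
          rw [show E.card - (ω'.card - η.card + t.card)
              = (E.card - ω'.card) + (η.card - t.card) by omega]
          rw [pow_add, pow_add]
          ring
      _ = x ^ (ω'.card - η.card) * (1 - x) ^ (E.card - ω'.card) := by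
          rw [← Finset.mul_sum, binom_one]
          ring
  · rw [if_neg hsub]
    refine Finset.sum_eq_zero fun X _ => ?_
    rw [if_neg]
    intro he
    exact hsub (he ▸ Finset.subset_union_left)

end Real

end Aux

/-- Coupling of the Loop O(1) model and FK-Ising (free boundary, no external field):
the law of `η' = η ∪ X` (unnormalized joint weights) is proportional to the
random cluster measure with `q = 2`, `p = 2x/(1+x)`. -/
theorem stmt13 {V : Type*} [Fintype V] [DecidableEq V] (G : SimpleGraph V)
    [DecidableRel G.Adj] (x : ℝ) (hx : x ∈ Set.Icc (0 : ℝ) 1) :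
    ∃ c : ℝ, 0 < c ∧ ∀ ω' ∈ G.edgeFinset.powerset,
      (∑ η ∈ G.edgeFinset.powerset.filter
          (fun η => ∀ v : V, Even ((η.filter fun e => v ∈ e).card)),
        ∑ X ∈ G.edgeFinset.powerset,
          (if η ∪ X = ω' then
            x ^ η.card * (x ^ X.card * (1 - x) ^ (G.edgeFinset.card - X.card))
          else 0))
      = c * ((2 * x / (1 + x)) ^ ω'.card
          * (1 - 2 * x / (1 + x)) ^ (G.edgeFinset.card - ω'.card)
          * (2 : ℝ) ^ Nat.card
              (SimpleGraph.fromEdgeSet (↑ω' : Set (Sym2 V))).ConnectedComponent) := by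
  classical
  obtain ⟨hx0, hx1⟩ := hx
  have h1x : (0:ℝ) < 1 + x := by linarith
  set M := G.edgeFinset.card with hM
  refine ⟨(1 + x) ^ M / 2 ^ (Fintype.card V), by positivity, ?_⟩
  intro ω' hω'
  rw [Finset.mem_powerset] at hω'
  set m := ω'.card with hm
  have hmM : m ≤ M := Finset.card_le_card hω'
  -- diag-free
  have hdiag : ∀ e ∈ ω', ¬ e.IsDiag := fun e he =>
    G.not_isDiag_of_mem_edgeSet (SimpleGraph.mem_edgeFinset.mp (hω' he))
  -- step 1: compute the double sum
  have hstep : (∑ η ∈ G.edgeFinset.powerset.filter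
          (fun η => ∀ v : V, Even ((η.filter fun e => v ∈ e).card)),
        ∑ X ∈ G.edgeFinset.powerset,
          (if η ∪ X = ω' then
            x ^ η.card * (x ^ X.card * (1 - x) ^ (G.edgeFinset.card - X.card))
          else 0))
      = ((ω'.powerset.filter
          (fun η => ∀ v : V, Even ((η.filter fun e => v ∈ e).card))).card : ℝ)
        * (x ^ m * (1 - x) ^ (M - m)) := by
    have hinner : ∀ η : Finset (Sym2 V),
        (∑ X ∈ G.edgeFinset.powerset,
          (if η ∪ X = ω' then
            x ^ η.card * (x ^ X.card * (1 - x) ^ (G.edgeFinset.card - X.card))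
          else 0))
        = if η ⊆ ω' then x ^ η.card * (x ^ (m - η.card) * (1 - x) ^ (M - m)) else 0 := by
      intro η
      have := innerSumX x G.edgeFinset ω' η hω'
      calc (∑ X ∈ G.edgeFinset.powerset,
          (if η ∪ X = ω' then
            x ^ η.card * (x ^ X.card * (1 - x) ^ (G.edgeFinset.card - X.card))
          else 0))
          = x ^ η.card * ∑ X ∈ G.edgeFinset.powerset,
            (if η ∪ X = ω' then (x ^ X.card * (1 - x) ^ (G.edgeFinset.card - X.card)) else 0) := by
            rw [Finset.mul_sum]
            exact Finset.sum_congr rfl fun X _ => by rw [mul_ite, mul_zero]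
        _ = _ := by rw [this, mul_ite, mul_zero]
    rw [Finset.sum_congr rfl (fun η _ => hinner η)]
    have hval : ∀ η ∈ G.edgeFinset.powerset.filter
          (fun η => ∀ v : V, Even ((η.filter fun e => v ∈ e).card)),
        (if η ⊆ ω' then x ^ η.card * (x ^ (m - η.card) * (1 - x) ^ (M - m)) else 0)
        = if η ⊆ ω' then x ^ m * (1 - x) ^ (M - m) else 0 := by
      intro η _
      by_cases h : η ⊆ ω'
      · have hc : η.card ≤ m := Finset.card_le_card h
        rw [if_pos h, if_pos h, ← mul_assoc, ← pow_add]
        congr 2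
        omega
      · rw [if_neg h, if_neg h]
    rw [Finset.sum_congr rfl hval, ← Finset.sum_filter]
    have hsets : (G.edgeFinset.powerset.filter
          (fun η => ∀ v : V, Even ((η.filter fun e => v ∈ e).card))).filter (fun η => η ⊆ ω')
        = ω'.powerset.filter (fun η => ∀ v : V, Even ((η.filter fun e => v ∈ e).card)) := by
      ext η
      simp only [Finset.mem_filter, Finset.mem_powerset]
      constructor
      · rintro ⟨⟨-, h2⟩, h3⟩; exact ⟨h3, h2⟩
      · rintro ⟨h1, h2⟩; exact ⟨⟨h1.trans hω', h2⟩, h1⟩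
    rw [hsets, Finset.sum_const, nsmul_eq_mul]
  rw [hstep]
  -- step 2: the counting identity
  have hcount := even_count ω' hdiag
  set N := (ω'.powerset.filter
      (fun η => ∀ v : V, Even ((η.filter fun e => v ∈ e).card))).card with hN
  set k := Nat.card (SimpleGraph.fromEdgeSet (↑ω' : Set (Sym2 V))).ConnectedComponent with hk
  have hcountR : (N : ℝ) * 2 ^ (Fintype.card V) = 2 ^ m * 2 ^ k := by
    have := congrArg (fun n : ℕ => (n : ℝ)) hcount
    push_cast at this
    simpa using this
  -- step 3: algebra
  have hp : 1 - 2 * x / (1 + x) = (1 - x) / (1 + x) := by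
    field_simp
    ring
  rw [hp, div_pow, div_pow]
  have h2V : (0:ℝ) < 2 ^ (Fintype.card V) := by positivity
  rw [div_mul_eq_mul_div, eq_div_iff (ne_of_gt h2V)]
  have hsplit : (1 + x) ^ M = (1 + x) ^ m * (1 + x) ^ (M - m) := by
    rw [← pow_add]
    congr 1
    omega
  field_simp
  rw [hsplit]
  linear_combination (x ^ m * (1 - x) ^ (M - m) * ((1 + x) ^ m * (1 + x) ^ (M - m))) * hcountR
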